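/- Let T be a labelled rooted tree encoding a matrix (a (d,F)-matrix-tree), v a vertex of T, T' = T − T_v the tree with the subtree rooted at v removed, and T'' the tree obtained from T by removing only the leaves of T_v labelled as columns. Then in the matrix A(T''), every row corresponding to a vertex of T_v is the zero row; consequently the vector matroids M(A(T')) and M(A(T'')) are isomorphic. -/
import Mathlib


/-!
STATEMENT 19: Let `T` be a matrix-tree: its vertices carry an ancestor
relation `anc` (reflexive and transitive), its row vertices are `R`, its
column leaves are `C`, and the associated matrix `A` satisfies
`A r c ≠ 0 → anc r c` (nonzero entries occur only when the row is an ancestor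
of the column).  Let `v` be a vertex, `Tv = {u | anc v u}` the subtree rooted
at `v`, `T' = T − Tv`, and `T''` the tree obtained from `T` by removing only
the column leaves in `Tv`.  Then in `A(T'')` every row lying in `Tv` is the
zero row, and consequently `M(A(T'))` and `M(A(T''))` are isomorphic: a
collection of columns (all outside `Tv`) is linearly dependent over the rows
`R \ Tv` iff it is linearly dependent over all rows `R`.
-/
theorem stmt19 {V : Type*} [Fintype V] {F : Type*} [Field F]
    (anc : V → V → Prop)
    (hrefl : ∀ u, anc u u)
    (htrans : ∀ u v w, anc u v → anc v w → anc u w)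
    (R C : Set V) (hRC : Disjoint R C)
    (A : V → V → F)
    (hA : ∀ r ∈ R, ∀ c ∈ C, A r c ≠ 0 → anc r c)
    (v : V) :
    -- every row of `A(T'')` corresponding to a vertex of `T_v` is zero:
    (∀ r ∈ R ∩ {u | anc v u}, ∀ c ∈ C \ {u | anc v u}, A r c = 0) ∧
    -- hence `M(A(T'))` and `M(A(T''))` are isomorphic (the identity on the
    -- common column set `C \ T_v` preserves linear dependence):
    ∀ coef : V → F, (∀ c, c ∉ C \ {u | anc v u} → coef c = 0) →
      ((∀ r ∈ R \ {u | anc v u}, (∑ c, coef c * A r c) = 0) ↔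
        (∀ r ∈ R, (∑ c, coef c * A r c) = 0)) := by
  have key : ∀ r ∈ R ∩ {u | anc v u}, ∀ c ∈ C \ {u | anc v u}, A r c = 0 := by
    rintro r ⟨hrR, hrv⟩ c ⟨hcC, hcv⟩
    by_contra h
    exact hcv (htrans v r c hrv (hA r hrR c hcC h))
  refine ⟨key, fun coef hcoef => ⟨fun h r hr => ?_, fun h r hr => h r hr.1⟩⟩
  by_cases hrv : anc v r
  · have : ∀ c, coef c * A r c = 0 := by
      intro c
      by_cases hc : c ∈ C \ {u | anc v u}
      · rw [key r ⟨hr, hrv⟩ c hc, mul_zero]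
      · rw [hcoef c hc, zero_mul]
    simp [this]
  · exact h r ⟨hr, hrv⟩
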